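/- The function t ↦ ∫_ℝ e^{ty} q(y) dy, where q(y) = (1/2)|y|e^{−y²/2}, is even and strictly convex on ℝ, and equals 1 only at t = 0. -/

import Mathlib

open MeasureTheory Set Real Filter

section LaplaceAux

/-- One-sided Gaussian tail integral. -/
noncomputable def Gg (c : ℝ) : ℝ := ∫ u in Ioi c, Real.exp (-u^2/2)

/-- Antiderivative of the Gaussian density (up to constant). -/
noncomputable def Ee (t : ℝ) : ℝ := ∫ u in (0:ℝ)..t, Real.exp (-u^2/2)

lemma integrable_gauss : Integrable (fun u : ℝ => Real.exp (-u^2/2)) :=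
  (integrable_exp_neg_mul_sq (b := 1/2) (by norm_num)).congr
    (Filter.Eventually.of_forall fun u => by ring_nf)

lemma cont_gauss : Continuous (fun u : ℝ => Real.exp (-u^2/2)) := by fun_prop

lemma integrable_abs_gauss : Integrable (fun y : ℝ => |y| * Real.exp (-(1:ℝ)/2 * y^2)) := by
  have := (integrable_mul_exp_neg_mul_sq (b := 1/2) (by norm_num)).abs
  refine this.congr (Filter.Eventually.of_forall fun y => ?_)
  simp only [abs_mul, abs_of_nonneg (Real.exp_nonneg _)]
  ring_nf

lemma integrable_shift_gauss (t : ℝ) :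
    Integrable (fun y : ℝ => |y| * Real.exp (-(y - t)^2/2)) := by
  have h1 : Integrable (fun u : ℝ => |u + t| * Real.exp (-u^2/2)) := by
    have hb : Integrable (fun u : ℝ => |u| * Real.exp (-u^2/2) + |t| * Real.exp (-u^2/2)) := by
      refine Integrable.add ?_ ?_
      · refine integrable_abs_gauss.congr (Filter.Eventually.of_forall fun y => ?_); ring_nf
      · exact ((integrable_exp_neg_mul_sq (b := 1/2) (by norm_num)).congr
          (Filter.Eventually.of_forall fun y => by ring_nf)).const_mul _
    refine hb.mono' ?_ (Filter.Eventually.of_forall fun u => ?_)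
    · apply Measurable.aestronglyMeasurable; fun_prop
    · rw [Real.norm_eq_abs, abs_of_nonneg (by positivity)]
      have : |u + t| ≤ |u| + |t| := abs_add_le u t
      nlinarith [Real.exp_pos (-u^2/2)]
  have := h1.comp_sub_right t
  refine this.congr (Filter.Eventually.of_forall fun y => ?_)
  simp [sub_add_cancel]

lemma hasDerivAt_negexp (t y : ℝ) :
    HasDerivAt (fun y : ℝ => -Real.exp (t * y - y^2/2)) ((y - t) * Real.exp (t * y - y^2/2)) y := by
  have h1 : HasDerivAt (fun y : ℝ => t * y - y^2/2) (t - y) y := by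
    have := ((hasDerivAt_id y).const_mul t).sub ((hasDerivAt_pow 2 y).div_const 2)
    exact this.congr_deriv (by ring)
  have := (h1.exp).neg
  refine this.congr_deriv ?_
  ring

lemma tendsto_negexp (t : ℝ) :
    Tendsto (fun y : ℝ => -Real.exp (t * y - y^2/2)) atTop (nhds 0) := by
  have h1 : Tendsto (fun y : ℝ => t * y - y^2/2) atTop atBot := by
    have h2 : Tendsto (fun y : ℝ => (y - t)^2/2) atTop atTop :=
      ((tendsto_pow_atTop (n := 2) (by norm_num)).comp
        (tendsto_atTop_add_const_right atTop (-t) tendsto_id)).atTop_div_const (by norm_num)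
    have h3 : Tendsto (fun y : ℝ => t^2/2 - (y - t)^2/2) atTop atBot := by
      exact (tendsto_atBot_add_const_left atTop (t^2/2) (tendsto_neg_atTop_atBot.comp h2)).congr
        fun y => by simp only [Function.comp_apply]; ring
    refine h3.congr fun y => by ring
  have := Real.tendsto_exp_atBot.comp h1
  simpa using this.neg

lemma integrable_sub_mul_exp (t : ℝ) :
    Integrable (fun y : ℝ => (y - t) * Real.exp (t * y - y^2/2)) := by
  have h0 : Integrable (fun u : ℝ => u * Real.exp (-u^2/2)) := by
    refine (integrable_mul_exp_neg_mul_sq (b := 1/2) (by norm_num)).congr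
      (Filter.Eventually.of_forall fun u => ?_)
    ring_nf
  have h1 := (h0.comp_sub_right t).const_mul (Real.exp (t^2/2))
  refine h1.congr (Filter.Eventually.of_forall fun y => ?_)
  have : Real.exp (t^2/2) * Real.exp (-(y - t)^2/2) = Real.exp (t * y - y^2/2) := by
    rw [← Real.exp_add]; congr 1; ring
  calc Real.exp (t ^ 2 / 2) * ((y - t) * Real.exp (-(y - t) ^ 2 / 2))
      = (y - t) * (Real.exp (t^2/2) * Real.exp (-(y - t)^2/2)) := by ring
    _ = (y - t) * Real.exp (t * y - y^2/2) := by rw [this]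

lemma int_sub_part (t : ℝ) :
    ∫ y in Ioi (0:ℝ), (y - t) * Real.exp (t * y - y^2/2) = 1 := by
  have := integral_Ioi_of_hasDerivAt_of_tendsto' (f := fun y : ℝ => -Real.exp (t * y - y^2/2))
    (f' := fun y : ℝ => (y - t) * Real.exp (t * y - y^2/2)) (a := 0)
    (fun x _ => hasDerivAt_negexp t x) (integrable_sub_mul_exp t).integrableOn (tendsto_negexp t)
  simpa using this

lemma shift_int (t : ℝ) :
    ∫ y in Ioi (0:ℝ), Real.exp (-(y - t)^2/2) = ∫ u in Ioi (-t), Real.exp (-u^2/2) := by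
  have h := (measurePreserving_sub_right (volume : Measure ℝ) t).setIntegral_preimage_emb
    ((Homeomorph.subRight (t:ℝ)).measurableEmbedding) (fun u => Real.exp (-u^2/2)) (Ioi (-t))
  have hpre : (fun y : ℝ => y - t) ⁻¹' Ioi (-t) = Ioi (0:ℝ) := by
    ext y; simp only [mem_preimage, mem_Ioi]; constructor <;> intro h <;> linarith
  rw [hpre] at h
  exact h

lemma exp_split (t y : ℝ) : Real.exp (t * y - y^2/2) = Real.exp (t^2/2) * Real.exp (-(y-t)^2/2) := by
  rw [← Real.exp_add]; congr 1; ring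

lemma integrable_gauss_exp (t : ℝ) : Integrable (fun y : ℝ => Real.exp (t * y - y^2/2)) := by
  have := ((integrable_gauss.comp_sub_right t).const_mul (Real.exp (t^2/2)))
  exact this.congr (Filter.Eventually.of_forall fun y => by simp only [exp_split])

lemma integrable_main (t : ℝ) :
    Integrable (fun y : ℝ => Real.exp (t * y) * ((1/2) * |y| * Real.exp (-y^2/2))) := by
  have := (integrable_shift_gauss t).const_mul ((1/2) * Real.exp (t^2/2))
  refine this.congr (Filter.Eventually.of_forall fun y => ?_)
  have h : Real.exp (t * y) * Real.exp (-y^2/2) = Real.exp (t^2/2) * Real.exp (-(y-t)^2/2) := by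
    rw [← Real.exp_add, ← Real.exp_add]; congr 1; ring
  calc (1/2) * Real.exp (t^2/2) * (|y| * Real.exp (-(y - t)^2/2))
      = (1/2) * |y| * (Real.exp (t^2/2) * Real.exp (-(y-t)^2/2)) := by ring
    _ = (1/2) * |y| * (Real.exp (t * y) * Real.exp (-y^2/2)) := by rw [h]
    _ = Real.exp (t * y) * ((1/2) * |y| * Real.exp (-y^2/2)) := by ring

lemma F_eq (t : ℝ) :
    ∫ y in Ioi (0:ℝ), y * Real.exp (t * y - y^2/2)
      = 1 + t * Real.exp (t^2/2) * Gg (-t) := by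
  have hsplit : ∀ y : ℝ, y * Real.exp (t * y - y^2/2)
      = (y - t) * Real.exp (t * y - y^2/2) + t * Real.exp (t * y - y^2/2) := fun y => by ring
  rw [setIntegral_congr_fun measurableSet_Ioi (fun y _ => hsplit y),
    integral_add ((integrable_sub_mul_exp t).integrableOn)
      (((integrable_gauss_exp t).const_mul t).integrableOn), int_sub_part]
  congr 1
  rw [integral_const_mul]
  have : ∫ y in Ioi (0:ℝ), Real.exp (t * y - y^2/2)
      = Real.exp (t^2/2) * Gg (-t) := by
    rw [setIntegral_congr_fun measurableSet_Ioi (fun y _ => exp_split t y),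
      integral_const_mul, Gg, shift_int]
  rw [this]; ring

lemma laplace_formula_G (t : ℝ) :
    (∫ y : ℝ, Real.exp (t * y) * ((1/2) * |y| * Real.exp (-y^2/2)))
      = 1 + (t/2) * Real.exp (t^2/2) * (Gg (-t) - Gg t) := by
  have hint := integrable_main t
  have hsplit : (∫ y : ℝ, Real.exp (t * y) * ((1/2) * |y| * Real.exp (-y^2/2)))
      = (∫ y in Iic (0:ℝ), Real.exp (t * y) * ((1/2) * |y| * Real.exp (-y^2/2)))
      + ∫ y in Ioi (0:ℝ), Real.exp (t * y) * ((1/2) * |y| * Real.exp (-y^2/2)) := by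
    rw [← setIntegral_union (Iic_disjoint_Ioi le_rfl) measurableSet_Ioi hint.integrableOn
      hint.integrableOn, Iic_union_Ioi, Measure.restrict_univ]
  have hIic : (∫ y in Iic (0:ℝ), Real.exp (t * y) * ((1/2) * |y| * Real.exp (-y^2/2)))
      = ∫ y in Ioi (0:ℝ), Real.exp ((-t) * y) * ((1/2) * |y| * Real.exp (-y^2/2)) := by
    have := integral_comp_neg_Iic (0:ℝ)
      (fun z => Real.exp ((-t) * z) * ((1/2) * |z| * Real.exp (-z^2/2)))
    rw [neg_zero] at this
    rw [← this]
    refine setIntegral_congr_fun measurableSet_Iic (fun y _ => ?_)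
    simp only [neg_mul, neg_neg, abs_neg, neg_sq]
    ring_nf
  have hpos : ∀ s : ℝ, (∫ y in Ioi (0:ℝ), Real.exp (s * y) * ((1/2) * |y| * Real.exp (-y^2/2)))
      = (1/2) * (1 + s * Real.exp (s^2/2) * Gg (-s)) := by
    intro s
    have : ∀ y ∈ Ioi (0:ℝ), Real.exp (s * y) * ((1/2) * |y| * Real.exp (-y^2/2))
        = (1/2) * (y * Real.exp (s * y - y^2/2)) := by
      intro y hy
      rw [abs_of_pos hy, show s*y - y^2/2 = s*y + (-y^2/2) by ring, Real.exp_add]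
      ring
    rw [setIntegral_congr_fun measurableSet_Ioi this, integral_const_mul, F_eq]
  rw [hsplit, hIic, hpos, hpos, neg_neg, neg_sq]
  ring

lemma Gg_sub {a b : ℝ} (h : a ≤ b) :
    Gg a - Gg b = ∫ u in a..b, Real.exp (-u^2/2) := by
  have : Gg a = (∫ u in Ioc a b, Real.exp (-u^2/2)) + Gg b := by
    rw [Gg, Gg, ← setIntegral_union (Ioc_disjoint_Ioi le_rfl) measurableSet_Ioi
      integrable_gauss.integrableOn integrable_gauss.integrableOn, Ioc_union_Ioi_eq_Ioi h]
  rw [this, intervalIntegral.integral_of_le h]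
  ring

lemma interval_even (t : ℝ) :
    (∫ u in (-t)..t, Real.exp (-u^2/2)) = 2 * ∫ u in (0:ℝ)..t, Real.exp (-u^2/2) := by
  have h1 : (∫ u in (-t)..(0:ℝ), Real.exp (-u^2/2)) = ∫ u in (0:ℝ)..t, Real.exp (-u^2/2) := by
    have := intervalIntegral.integral_comp_neg (a := (0:ℝ)) (b := t)
      (fun u => Real.exp (-u^2/2))
    simp only [neg_sq, neg_zero] at this
    rw [← this]
  rw [← intervalIntegral.integral_add_adjacent_intervals (b := (0:ℝ))
    integrable_gauss.intervalIntegrable integrable_gauss.intervalIntegrable, h1]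
  ring

lemma Gg_diff (t : ℝ) :
    Gg (-t) - Gg t = 2 * ∫ u in (0:ℝ)..t, Real.exp (-u^2/2) := by
  rcases le_or_gt 0 t with h | h
  · rw [Gg_sub (by linarith : -t ≤ t), interval_even]
  · have := Gg_sub (by linarith : t ≤ -t)
    have h2 : Gg (-t) - Gg t = -(∫ u in t..(-t), Real.exp (-u^2/2)) := by linarith
    rw [h2, ← intervalIntegral.integral_symm, interval_even]

noncomputable def gL (t : ℝ) : ℝ := 1 + t * Real.exp (t^2/2) * Ee t

lemma laplace_formula (t : ℝ) :
    (∫ y : ℝ, Real.exp (t * y) * ((1/2) * |y| * Real.exp (-y^2/2))) = gL t := by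
  rw [laplace_formula_G, Gg_diff, gL, Ee]
  ring

lemma Ee_neg (t : ℝ) : Ee (-t) = -Ee t := by
  have h1 : (∫ u in (-t)..(0:ℝ), Real.exp (-u^2/2)) = ∫ u in (0:ℝ)..t, Real.exp (-u^2/2) := by
    have := intervalIntegral.integral_comp_neg (a := (0:ℝ)) (b := t)
      (fun u => Real.exp (-u^2/2))
    simp only [neg_sq, neg_zero] at this
    rw [← this]
  rw [Ee, Ee, intervalIntegral.integral_symm, h1]

lemma Ee_hasDeriv (t : ℝ) : HasDerivAt Ee (Real.exp (-t^2/2)) t := by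
  refine intervalIntegral.integral_hasDerivAt_right
    (integrable_gauss.intervalIntegrable) ?_ cont_gauss.continuousAt
  exact cont_gauss.stronglyMeasurableAtFilter _ _

lemma Ee_nonneg {t : ℝ} (h : 0 ≤ t) : 0 ≤ Ee t :=
  intervalIntegral.integral_nonneg h (fun u _ => (Real.exp_pos _).le)

lemma Ee_pos {t : ℝ} (h : 0 < t) : 0 < Ee t :=
  intervalIntegral.intervalIntegral_pos_of_pos
    (integrable_gauss.intervalIntegrable) (fun x => Real.exp_pos _) h

lemma tEe_nonneg (t : ℝ) : 0 ≤ t * Ee t := by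
  rcases le_or_gt 0 t with h | h
  · exact mul_nonneg h (Ee_nonneg h)
  · have : Ee t ≤ 0 := by
      have := Ee_neg (-t); rw [neg_neg] at this
      have h2 : 0 ≤ Ee (-t) := Ee_nonneg (by linarith)
      linarith
    nlinarith

lemma tEe_pos {t : ℝ} (h : t ≠ 0) : 0 < t * Ee t := by
  rcases lt_or_gt_of_ne h with h | h
  · have h1 : 0 < Ee (-t) := Ee_pos (by linarith)
    have h2 := Ee_neg t
    nlinarith
  · exact mul_pos h (Ee_pos h)

noncomputable def gL1 (t : ℝ) : ℝ := (1 + t^2) * Real.exp (t^2/2) * Ee t + t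
noncomputable def gL2 (t : ℝ) : ℝ := (t^3 + 3*t) * Real.exp (t^2/2) * Ee t + (t^2 + 2)

lemma exp_sq_hasDeriv (t : ℝ) :
    HasDerivAt (fun t : ℝ => Real.exp (t^2/2)) (t * Real.exp (t^2/2)) t := by
  have h1 : HasDerivAt (fun t : ℝ => t^2/2) t t := by
    simpa using (hasDerivAt_pow 2 t).div_const 2
  simpa [mul_comm] using h1.exp

lemma gL_hasDeriv (t : ℝ) : HasDerivAt gL (gL1 t) t := by
  have h1 : HasDerivAt (fun t : ℝ => t * Real.exp (t^2/2))
      (Real.exp (t^2/2) + t * (t * Real.exp (t^2/2))) t := by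
    exact ((hasDerivAt_id t).mul (exp_sq_hasDeriv t)).congr_deriv (by simp)
  have h2 := (h1.mul (Ee_hasDeriv t)).const_add 1
  refine h2.congr_deriv (Eq.symm ?_)
  have : Real.exp (t^2/2) * Real.exp (-t^2/2) = 1 := by
    rw [← Real.exp_add, show t^2/2 + -t^2/2 = 0 by ring, Real.exp_zero]
  unfold gL1
  linear_combination (-t) * this

lemma gL1_hasDeriv (t : ℝ) : HasDerivAt gL1 (gL2 t) t := by
  have h1 : HasDerivAt (fun t : ℝ => (1 + t^2) * Real.exp (t^2/2))
      ((2*t) * Real.exp (t^2/2) + (1 + t^2) * (t * Real.exp (t^2/2))) t := by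
    have ha : HasDerivAt (fun t : ℝ => 1 + t^2) (2*t) t := by
      simpa using (hasDerivAt_pow 2 t).const_add 1
    exact ha.mul (exp_sq_hasDeriv t)
  have h2 := (h1.mul (Ee_hasDeriv t)).add (hasDerivAt_id t)
  refine h2.congr_deriv (Eq.symm ?_)
  have : Real.exp (t^2/2) * Real.exp (-t^2/2) = 1 := by
    rw [← Real.exp_add, show t^2/2 + -t^2/2 = 0 by ring, Real.exp_zero]
  unfold gL2
  linear_combination (-(1+t^2)) * this

lemma gL2_pos (t : ℝ) : 0 < gL2 t := by
  unfold gL2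
  have h1 : 0 ≤ (t^3 + 3*t) * Real.exp (t^2/2) * Ee t := by
    have : (t^3 + 3*t) * Real.exp (t^2/2) * Ee t
        = (t^2 + 3) * Real.exp (t^2/2) * (t * Ee t) := by ring
    rw [this]
    exact mul_nonneg (mul_nonneg (by positivity) (Real.exp_pos _).le) (tEe_nonneg t)
  nlinarith

lemma gL_strictConvex : StrictConvexOn ℝ Set.univ gL := by
  refine strictConvexOn_of_deriv2_pos convex_univ ?_ ?_
  · exact (Differentiable.continuous fun t => (gL_hasDeriv t).differentiableAt).continuousOn
  · intro x _
    have hd1 : deriv gL = gL1 := funext fun t => (gL_hasDeriv t).deriv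
    have : (deriv^[2] gL) x = gL2 x := by
      show deriv (deriv gL) x = gL2 x
      rw [hd1]
      exact (gL1_hasDeriv x).deriv
    rw [this]
    exact gL2_pos x

end LaplaceAux

theorem laplace_of_q_even_strictConvex_eq_one_iff :
    (∀ t : ℝ,
      (∫ y : ℝ, Real.exp ((-t) * y) * ((1 / 2) * |y| * Real.exp (-y ^ 2 / 2)))
        = ∫ y : ℝ, Real.exp (t * y) * ((1 / 2) * |y| * Real.exp (-y ^ 2 / 2))) ∧
    StrictConvexOn ℝ Set.univ
      (fun t : ℝ => ∫ y : ℝ, Real.exp (t * y) * ((1 / 2) * |y| * Real.exp (-y ^ 2 / 2))) ∧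
    (∀ t : ℝ,
      (∫ y : ℝ, Real.exp (t * y) * ((1 / 2) * |y| * Real.exp (-y ^ 2 / 2))) = 1 ↔ t = 0) := by
  have hfun : (fun t : ℝ => ∫ y : ℝ, Real.exp (t * y) * ((1 / 2) * |y| * Real.exp (-y ^ 2 / 2)))
      = gL := funext fun t => laplace_formula t
  refine ⟨fun t => ?_, ?_, fun t => ?_⟩
  · have h1 := laplace_formula (-t)
    have h2 := laplace_formula t
    rw [h1, h2, gL, gL, neg_sq, Ee_neg]
    ring
  · rw [hfun]; exact gL_strictConvex
  · rw [laplace_formula t, gL]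
    constructor
    · intro h
      by_contra ht
      have := tEe_pos ht
      nlinarith [Real.exp_pos (t^2/2)]
    · intro h; simp [h, Ee]
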